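/- Let g = sl(2,ℂ) act on F_μ ⊕ u·F_μ where u = log(t₀t₁), via the vector-field action E_{ij} ↦ t_i ∂/∂t_j (so E_{ij}(uf) = u·E_{ij}f + (t_i/t_j)f). Then the Casimir operator Ω = E₀₁E₁₀ + E₁₀E₀₁ + (E₀₀−E₁₁)²/2 acts on u·f by Ω(uf) = u·Ω(f) + 2(1+|μ|)f for all f ∈ F_μ. In particular, if |μ| ≠ −1 the self-extension 0 → F_μ → F_μ ⊕ uF_μ → F_μ → 0 does not split. -/

import Mathlib

/-! The cuspidal `sl(2)`-module `F_μ` realized on `ℤ → ℂ` (basis `e_k = t₀^{μ₀+k} t₁^{μ₁-k}`),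
and the self-extension `N = F_μ ⊕ u·F_μ`, `u = log(t₀t₁)`, realized on `(ℤ → ℂ) × (ℤ → ℂ)`
(a pair `(f, g)` stands for `f + u·g`).  `E_{ij}(u) = t_i/t_j` gives the extension terms. -/

noncomputable def Xop (μ₁ : ℂ) : Module.End ℂ (ℤ → ℂ) where
  toFun f := fun k => (μ₁ - ((k : ℂ) - 1)) * f (k - 1)
  map_add' f g := by funext k; simp [mul_add]
  map_smul' c f := by funext k; simp [smul_eq_mul]; ring

noncomputable def Yop (μ₀ : ℂ) : Module.End ℂ (ℤ → ℂ) where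
  toFun f := fun k => (μ₀ + ((k : ℂ) + 1)) * f (k + 1)
  map_add' f g := by funext k; simp [mul_add]
  map_smul' c f := by funext k; simp [smul_eq_mul]; ring

noncomputable def Hop (μ₀ μ₁ : ℂ) : Module.End ℂ (ℤ → ℂ) where
  toFun f := fun k => (μ₀ - μ₁ + 2 * (k : ℂ)) * f k
  map_add' f g := by funext k; simp [mul_add]
  map_smul' c f := by funext k; simp [smul_eq_mul]; ring

/-- Multiplication by `t₀/t₁` on `F_μ`. -/
noncomputable def TX : Module.End ℂ (ℤ → ℂ) where
  toFun f := fun k => f (k - 1)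
  map_add' f g := by funext k; simp
  map_smul' c f := by funext k; simp

/-- Multiplication by `t₁/t₀` on `F_μ`. -/
noncomputable def TY : Module.End ℂ (ℤ → ℂ) where
  toFun f := fun k => f (k + 1)
  map_add' f g := by funext k; simp
  map_smul' c f := by funext k; simp

/-- The action of `X` on `N = F_μ ⊕ u·F_μ`:  `X(f + u g) = X f + (t₀/t₁) g + u·X g`. -/
noncomputable def XN (μ₁ : ℂ) : Module.End ℂ ((ℤ → ℂ) × (ℤ → ℂ)) :=
  (((Xop μ₁).comp (LinearMap.fst ℂ _ _) + TX.comp (LinearMap.snd ℂ _ _)).prod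
    ((Xop μ₁).comp (LinearMap.snd ℂ _ _)))

/-- The action of `Y` on `N`. -/
noncomputable def YN (μ₀ : ℂ) : Module.End ℂ ((ℤ → ℂ) × (ℤ → ℂ)) :=
  (((Yop μ₀).comp (LinearMap.fst ℂ _ _) + TY.comp (LinearMap.snd ℂ _ _)).prod
    ((Yop μ₀).comp (LinearMap.snd ℂ _ _)))

/-- The action of `H` on `N` (note `H(u) = 0`). -/
noncomputable def HN (μ₀ μ₁ : ℂ) : Module.End ℂ ((ℤ → ℂ) × (ℤ → ℂ)) :=
  ((Hop μ₀ μ₁).comp (LinearMap.fst ℂ _ _)).prod ((Hop μ₀ μ₁).comp (LinearMap.snd ℂ _ _))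

/-- The Casimir operator `Ω = E₀₁E₁₀ + E₁₀E₀₁ + (E₀₀−E₁₁)²/2` on `N`. -/
noncomputable def CasimirN (μ₀ μ₁ : ℂ) : Module.End ℂ ((ℤ → ℂ) × (ℤ → ℂ)) :=
  XN μ₁ * YN μ₀ + YN μ₀ * XN μ₁ + (2 : ℂ)⁻¹ • (HN μ₀ μ₁ * HN μ₀ μ₁)

/-- The Casimir operator on `F_μ`. -/
noncomputable def Casimir0 (μ₀ μ₁ : ℂ) : Module.End ℂ (ℤ → ℂ) :=
  Xop μ₁ * Yop μ₀ + Yop μ₀ * Xop μ₁ + (2 : ℂ)⁻¹ • (Hop μ₀ μ₁ * Hop μ₀ μ₁)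

/-- On `N = F_μ ⊕ u·F_μ` the Casimir operator satisfies
`Ω(u f) = u·Ω(f) + 2(1+|μ|)·f`; in particular, when `|μ| = μ₀ + μ₁ ≠ −1` the self-extension
`0 → F_μ → N → F_μ → 0` does not split (there is no `sl(2)`-equivariant section of the
projection `N → F_μ`, `(f, g) ↦ g`). -/

lemma casimir0_scalar (μ₀ μ₁ : ℂ) (f : ℤ → ℂ) :
    Casimir0 μ₀ μ₁ f = ((μ₀ + μ₁) + (μ₀ + μ₁) ^ 2 / 2) • f := by
  funext k
  simp only [Casimir0, Xop, Yop, Hop, LinearMap.add_apply, Module.End.mul_apply,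
    LinearMap.smul_apply, LinearMap.coe_mk, AddHom.coe_mk, Pi.add_apply, Pi.smul_apply,
    smul_eq_mul]
  push_cast
  ring

lemma casimirN_eq (μ₀ μ₁ : ℂ) (g f : ℤ → ℂ) :
    CasimirN μ₀ μ₁ (g, f) =
      (Casimir0 μ₀ μ₁ g + (2 * (1 + (μ₀ + μ₁))) • f, Casimir0 μ₀ μ₁ f) := by
  have h : ∀ p : (ℤ → ℂ) × (ℤ → ℂ), CasimirN μ₀ μ₁ p =
      (Casimir0 μ₀ μ₁ p.1 + (2 * (1 + (μ₀ + μ₁))) • p.2, Casimir0 μ₀ μ₁ p.2) := by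
    intro p
    apply Prod.ext
    · funext k
      simp only [CasimirN, Casimir0, XN, YN, HN, Xop, Yop, Hop, TX, TY,
        LinearMap.add_apply, Module.End.mul_apply, LinearMap.smul_apply,
        LinearMap.prod_apply, LinearMap.comp_apply, LinearMap.fst_apply,
        LinearMap.snd_apply, Function.prod, LinearMap.coe_mk, AddHom.coe_mk,
        Prod.fst_add, Prod.snd_add, Prod.smul_fst, Prod.smul_snd,
        Pi.add_apply, Pi.smul_apply, smul_eq_mul]
      push_cast
      ring
    · funext k
      simp only [CasimirN, Casimir0, XN, YN, HN, Xop, Yop, Hop, TX, TY,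
        LinearMap.add_apply, Module.End.mul_apply, LinearMap.smul_apply,
        LinearMap.prod_apply, LinearMap.comp_apply, LinearMap.fst_apply,
        LinearMap.snd_apply, Function.prod, LinearMap.coe_mk, AddHom.coe_mk,
        Prod.fst_add, Prod.snd_add, Prod.smul_fst, Prod.smul_snd,
        Pi.add_apply, Pi.smul_apply, smul_eq_mul]
      try push_cast
      try ring
  exact h (g, f)

theorem casimir_on_log_extension
    (μ₀ μ₁ : ℂ) (hμ₀ : ∀ z : ℤ, μ₀ ≠ z) (hμ₁ : ∀ z : ℤ, μ₁ ≠ z) :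
    (∀ f : ℤ → ℂ,
      CasimirN μ₀ μ₁ (0, f) = ((2 * (1 + (μ₀ + μ₁))) • f, Casimir0 μ₀ μ₁ f)) ∧
    (μ₀ + μ₁ ≠ -1 →
      ¬ ∃ s : (ℤ → ℂ) →ₗ[ℂ] ((ℤ → ℂ) × (ℤ → ℂ)),
          (∀ f, (s f).2 = f) ∧
          (∀ f, s (Xop μ₁ f) = XN μ₁ (s f)) ∧
          (∀ f, s (Yop μ₀ f) = YN μ₀ (s f)) ∧
          (∀ f, s (Hop μ₀ μ₁ f) = HN μ₀ μ₁ (s f))) := by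
  constructor
  · intro f
    rw [casimirN_eq]
    simp only [map_zero, zero_add]
  · intro hne ⟨s, h2, hX, hY, hH⟩
    have hcomm : ∀ f, s (Casimir0 μ₀ μ₁ f) = CasimirN μ₀ μ₁ (s f) := by
      intro f
      simp only [Casimir0, CasimirN, LinearMap.add_apply, Module.End.mul_apply,
        LinearMap.smul_apply, map_add, map_smul, hX, hY, hH]
    have key := hcomm (fun _ => 1)
    set c : ℂ := (μ₀ + μ₁) + (μ₀ + μ₁) ^ 2 / 2
    have hs2 : (s (fun _ => 1)).2 = (fun _ => 1) := h2 _
    rw [casimir0_scalar, map_smul] at key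
    have hrhs : CasimirN μ₀ μ₁ (s (fun _ => 1)) =
        (Casimir0 μ₀ μ₁ (s (fun _ => 1)).1 + (2 * (1 + (μ₀ + μ₁))) • (fun _ => (1:ℂ)),
          Casimir0 μ₀ μ₁ (fun _ => 1)) := by
      rw [show s (fun _ => (1:ℂ)) = ((s (fun _ => 1)).1, (fun _ => 1)) from
        Prod.ext rfl hs2]
      exact casimirN_eq μ₀ μ₁ _ _
    rw [hrhs] at key
    have h1 := congrArg Prod.fst key
    rw [casimir0_scalar] at h1
    simp only [Prod.smul_fst] at h1
    have h0 := congrFun h1 0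
    simp only [Pi.add_apply, Pi.smul_apply, smul_eq_mul, mul_one] at h0
    have hmul : 2 * (1 + (μ₀ + μ₁)) = 0 := by linear_combination -h0
    have : (1 : ℂ) + (μ₀ + μ₁) = 0 := by
      rcases mul_eq_zero.mp hmul with h | h
      · norm_num at h
      · exact h
    apply hne
    linear_combination this
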